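/- Let {π₁, π₂} be two votes over C ∪ {p} coincident with harmonious order L, forming a successful manipulation (p's total strictly exceeds all others). Let c ∈ C with π₁(c) = x and π₂(c) = y, and suppose there exist x' > x and y' > y with s(c) + x' + y' − 2 < s(p) + 2|C| (where s denotes nonmanipulator score plus offset as appropriate) and such that all candidates at positions x+1,…,x' in π₁ and positions y+1,…,y' in π₂ lie on the opposite side of p from c in L. Then the votes π₁', π₂' obtained by moving c up to positions x' and y' respectively (shifting the intervening candidates down by one) are also coincident with L and form a successful manipulation. -/

import Mathlib

/-- A vote `π` is coincident with (single-peaked w.r.t.) a societal order `L`. -/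
def Coincident {C : Type*} {n : ℕ} (L π : C ≃ Fin n) : Prop :=
  ∀ a b c : C, ((L a < L b ∧ L b < L c) ∨ (L c < L b ∧ L b < L a)) →
    π b < π c → π a < π b

/-- Candidate `d` lies on the opposite side of `p` (modelled as `none`)
from `c` in the harmonious order `L`. -/
def OppSide {n : ℕ} (L : Option (Fin n) ≃ Fin (n + 1)) (c : Fin n)
    (d : Option (Fin n)) : Prop :=
  (L (some c) < L none ∧ L none < L d) ∨ (L none < L (some c) ∧ L d < L none)

namespace SpShiftAux

/-- The permutation of `Fin m` moving `x` up to `x'` and shifting `(x, x']` down by one. -/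
def shiftPerm {m : ℕ} (x x' : Fin m) (hxx' : x < x') : Equiv.Perm (Fin m) where
  toFun j := if j = x then x' else if x < j ∧ j ≤ x' then
      ⟨j.val - 1, Nat.lt_of_le_of_lt (Nat.sub_le _ _) j.isLt⟩ else j
  invFun k := if k = x' then x else if h : x ≤ k ∧ k < x' then
      ⟨k.val + 1, Nat.lt_of_le_of_lt (Fin.lt_def.mp h.2) x'.isLt⟩ else k
  left_inv := by
    intro j
    dsimp only
    split_ifs <;>
      (try rfl) <;>
      (simp only [Fin.ext_iff, Fin.lt_def, Fin.le_def, not_and, not_lt, not_le, not_true, ne_eq] at *) <;> omega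
  right_inv := by
    intro k
    dsimp only
    split_ifs <;>
      (try rfl) <;>
      (simp only [Fin.ext_iff, Fin.lt_def, Fin.le_def, not_and, not_lt, not_le, not_true, ne_eq] at *) <;> omega

variable {m : ℕ} {x x' : Fin m} (h : x < x')

lemma shiftPerm_apply_self : shiftPerm x x' h x = x' := by
  simp [shiftPerm]

lemma shiftPerm_apply_of_out {j : Fin m} (hj : j < x ∨ x' < j) :
    shiftPerm x x' h j = j := by
  simp only [shiftPerm, Equiv.coe_fn_mk]
  split_ifs <;> (try rfl) <;>
    (simp only [Fin.ext_iff, Fin.lt_def, Fin.le_def, not_and, not_lt, not_le, not_true, ne_eq] at *) <;> omega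

lemma shiftPerm_apply_of_mem {j : Fin m} (h1 : x < j) (h2 : j ≤ x') :
    ((shiftPerm x x' h) j : ℕ) + 1 = (j : ℕ) := by
  simp only [shiftPerm, Equiv.coe_fn_mk]
  split_ifs <;>
    (simp only [Fin.ext_iff, Fin.lt_def, Fin.le_def, not_and, not_lt, not_le, not_true, ne_eq] at *) <;> omega

lemma shiftPerm_le {j : Fin m} (hj : j ≠ x) :
    ((shiftPerm x x' h) j : ℕ) ≤ (j : ℕ) := by
  simp only [shiftPerm, Equiv.coe_fn_mk]
  split_ifs <;>
    (simp only [Fin.ext_iff, Fin.lt_def, Fin.le_def, not_and, not_lt, not_le, not_true, ne_eq] at *) <;> omega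

lemma shiftPerm_lt_iff {j k : Fin m} (hj : j ≠ x) (hk : k ≠ x) :
    shiftPerm x x' h j < shiftPerm x x' h k ↔ j < k := by
  simp only [shiftPerm, Equiv.coe_fn_mk]
  have := Fin.lt_def.mp h
  split_ifs <;>
    (simp only [Fin.ext_iff, Fin.lt_def, Fin.le_def, not_and, not_lt, not_le, not_true, ne_eq] at *) <;> omega

lemma shiftPerm_gt_iff {j : Fin m} (hj : j ≠ x) :
    x' < shiftPerm x x' h j ↔ x' < j := by
  simp only [shiftPerm, Equiv.coe_fn_mk]
  have := Fin.lt_def.mp h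
  split_ifs <;>
    (simp only [Fin.ext_iff, Fin.lt_def, Fin.le_def, not_and, not_lt, not_le, not_true, ne_eq] at *) <;> omega

lemma shiftPerm_lt_right_iff {j : Fin m} (hj : j ≠ x) :
    shiftPerm x x' h j < x' ↔ j ≤ x' := by
  simp only [shiftPerm, Equiv.coe_fn_mk]
  have := Fin.lt_def.mp h
  split_ifs <;>
    (simp only [Fin.ext_iff, Fin.lt_def, Fin.le_def, not_and, not_lt, not_le, not_true, ne_eq] at *) <;> omega

/-- If `b` lies strictly between `t` and `c` in `L`, on the opposite side of `none`
from `c`, and sits at a position in `(x, x']` while `none` sits outside `[x, x']`,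
then `b` cannot be ranked below `t`. -/
lemma between_opp {n : ℕ} (L π : Option (Fin n) ≃ Fin (n + 1)) (hcoin : Coincident L π)
    (c : Fin n) (x x' : Fin (n + 1)) (hx : π (some c) = x)
    (hnone : π none < x ∨ x' < π none)
    (b t : Option (Fin n))
    (hbet : (L t < L b ∧ L b < L (some c)) ∨ (L (some c) < L b ∧ L b < L t))
    (hopp : OppSide L c b)
    (hb1 : x < π b) (hb2 : π b ≤ x') :
    ¬ (π b < π t) := by
  intro hlt
  have hbet1 : (L none < L b ∧ L b < L t) ∨ (L t < L b ∧ L b < L none) := by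
    rcases hbet with ⟨h1, h2⟩ | ⟨h1, h2⟩ <;> rcases hopp with ⟨h3, h4⟩ | ⟨h3, h4⟩ <;>
      simp only [Fin.lt_def] at * <;> omega
  have hbet2 : (L b < L none ∧ L none < L (some c)) ∨
      (L (some c) < L none ∧ L none < L b) := by
    rcases hopp with ⟨h3, h4⟩ | ⟨h3, h4⟩ <;>
      simp only [Fin.lt_def] at * <;> omega
  have h5 : π none < π b := hcoin none b t hbet1 hlt
  have h6 : π none < x := by
    rcases hnone with h | h
    · exact h
    · exact absurd (lt_of_le_of_lt hb2 h) (asymm h5)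
  have h7 : π b < π none := hcoin b none (some c) hbet2 (by rw [hx]; exact h6)
  exact absurd h5 (asymm h7)


lemma coincident_shift {n : ℕ} (L π : Option (Fin n) ≃ Fin (n + 1))
    (hcoin : Coincident L π) (c : Fin n) (x x' : Fin (n + 1))
    (hx : π (some c) = x) (hxx' : x < x')
    (hopp : ∀ j : Fin (n + 1), x < j → j ≤ x' → OppSide L c (π.symm j)) :
    Coincident L (π.trans (shiftPerm x x' hxx')) := by
  have hπx : ∀ e : Option (Fin n), π e = x ↔ e = some c := by
    intro e
    constructor
    · intro he; apply π.injective; rw [he, hx]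
    · rintro rfl; exact hx
  have hnone : π none < x ∨ x' < π none := by
    by_contra hcon
    push_neg at hcon
    obtain ⟨h1, h2⟩ := hcon
    have hne : π none ≠ x := by
      intro hh
      exact Option.some_ne_none c ((hπx none).mp hh).symm
    have hltx : x < π none := lt_of_le_of_ne h1 (Ne.symm hne)
    have := hopp (π none) hltx h2
    rw [Equiv.symm_apply_apply] at this
    rcases this with ⟨_, hh⟩ | ⟨_, hh⟩ <;> exact absurd hh (lt_irrefl _)
  intro a b d hbet hlt
  simp only [Equiv.trans_apply] at hlt ⊢
  -- distinctness
  have hab : a ≠ b := by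
    rintro rfl; rcases hbet with ⟨h1, _⟩ | ⟨_, h2⟩ <;> exact absurd ‹_› (lt_irrefl _)
  have hbd : b ≠ d := by
    rintro rfl; rcases hbet with ⟨_, h2⟩ | ⟨h1, _⟩ <;> exact absurd ‹_› (lt_irrefl _)
  have had : a ≠ d := by
    rintro rfl
    rcases hbet with ⟨h1, h2⟩ | ⟨h1, h2⟩ <;> exact absurd (lt_trans h1 h2) (lt_irrefl _)
  by_cases hb : b = some c
  · -- b = c : the moved candidate is the middle one
    subst hb
    rw [hx, shiftPerm_apply_self] at hlt
    have hd : π d ≠ x := fun hh => hbd ((hπx d).mp hh).symm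
    have hdx' : x' < π d := ((shiftPerm_gt_iff hxx' hd).mp hlt)
    have ha : π a < π (some c) := hcoin a (some c) d hbet (by rw [hx]; exact lt_trans hxx' hdx')
    rw [hx] at ha
    rw [hx, shiftPerm_apply_self, shiftPerm_apply_of_out hxx' (Or.inl ha)]
    exact lt_trans ha hxx'
  · by_cases hd : d = some c
    · -- d = c : conclusion about a and b
      subst hd
      rw [hx, shiftPerm_apply_self] at hlt
      have hbx : π b ≠ x := fun hh => hb ((hπx b).mp hh)
      have hble : π b ≤ x' := (shiftPerm_lt_right_iff hxx' hbx).mp hlt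
      have hax : π a ≠ x := fun hh => had ((hπx a).mp hh)
      rcases lt_or_gt_of_ne hbx with hlt2 | hlt2
      · -- π b < x
        have ha : π a < π b := hcoin a b (some c) hbet (by rw [hx]; exact hlt2)
        exact (shiftPerm_lt_iff hxx' hax hbx).mpr ha
      · -- x < π b ≤ x'
        have hoppb : OppSide L c b := by
          have := hopp (π b) hlt2 hble
          rwa [Equiv.symm_apply_apply] at this
        have hnlt : ¬ (π b < π a) :=
          between_opp L π hcoin c x x' hx hnone b a hbet hoppb hlt2 hble
        have hne : π a ≠ π b := fun hh => hab (π.injective hh)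
        have ha : π a < π b := lt_of_le_of_ne (le_of_not_gt hnlt) hne
        exact (shiftPerm_lt_iff hxx' hax hbx).mpr ha
    · by_cases ha : a = some c
      · -- a = c
        subst ha
        rw [hx, shiftPerm_apply_self]
        have hbx : π b ≠ x := fun hh => hb ((hπx b).mp hh)
        have hdx : π d ≠ x := fun hh => hd ((hπx d).mp hh)
        have hbd' : π b < π d := (shiftPerm_lt_iff hxx' hbx hdx).mp hlt
        have hgt : x' < π b := by
          by_contra hcon
          have hble : π b ≤ x' := le_of_not_gt hcon
          rcases lt_or_gt_of_ne hbx with hlt2 | hlt2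
          · have := hcoin (some c) b d hbet hbd'
            rw [hx] at this
            exact absurd hlt2 (asymm this)
          · have hoppb : OppSide L c b := by
              have := hopp (π b) hlt2 hble
              rwa [Equiv.symm_apply_apply] at this
            have hbet' : (L d < L b ∧ L b < L (some c)) ∨
                (L (some c) < L b ∧ L b < L d) := hbet.symm
            exact between_opp L π hcoin c x x' hx hnone b d hbet' hoppb hlt2 hble hbd'
        rw [shiftPerm_apply_of_out hxx' (Or.inr hgt)]
        exact hgt
      · -- generic case
        have hax : π a ≠ x := fun hh => ha ((hπx a).mp hh)
        have hbx : π b ≠ x := fun hh => hb ((hπx b).mp hh)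
        have hdx : π d ≠ x := fun hh => hd ((hπx d).mp hh)
        have hbd' : π b < π d := (shiftPerm_lt_iff hxx' hbx hdx).mp hlt
        exact (shiftPerm_lt_iff hxx' hax hbx).mpr (hcoin a b d hbet hbd')
end SpShiftAux

open SpShiftAux in
/-- If in a successful two-manipulator single-peaked Borda manipulation a
candidate `c` can be moved up to positions `x'` and `y'` (shifting the
intervening candidates, all on the opposite side of `p`, down by one) while
keeping its total score below `p`'s, the recast votes form another successful
single-peaked manipulation. -/
theorem sp_shift_up_solution {n : ℕ}
    (L π₁ π₂ : Option (Fin n) ≃ Fin (n + 1)) (s : Fin n → ℕ) (sp : ℕ)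
    (hcoin₁ : Coincident L π₁) (hcoin₂ : Coincident L π₂)
    (hsucc : ∀ d : Fin n,
      s d + (π₁ (some d) : ℕ) + (π₂ (some d) : ℕ) < sp + 2 * n)
    (c : Fin n) (x y x' y' : Fin (n + 1))
    (hx : π₁ (some c) = x) (hy : π₂ (some c) = y)
    (hxx' : x < x') (hyy' : y < y')
    (hscore : s c + (x' : ℕ) + (y' : ℕ) < sp + 2 * n)
    (hopp₁ : ∀ j : Fin (n + 1), x < j → j ≤ x' → OppSide L c (π₁.symm j))
    (hopp₂ : ∀ j : Fin (n + 1), y < j → j ≤ y' → OppSide L c (π₂.symm j)) :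
    ∃ π₁' π₂' : Option (Fin n) ≃ Fin (n + 1),
      Coincident L π₁' ∧ Coincident L π₂' ∧
      π₁' (some c) = x' ∧ π₂' (some c) = y' ∧
      (∀ d, π₁ d < x ∨ x' < π₁ d → π₁' d = π₁ d) ∧
      (∀ d, d ≠ some c → x < π₁ d → π₁ d ≤ x' → (π₁' d : ℕ) + 1 = (π₁ d : ℕ)) ∧
      (∀ d, π₂ d < y ∨ y' < π₂ d → π₂' d = π₂ d) ∧
      (∀ d, d ≠ some c → y < π₂ d → π₂ d ≤ y' → (π₂' d : ℕ) + 1 = (π₂ d : ℕ)) ∧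
      (∀ d : Fin n,
        s d + (π₁' (some d) : ℕ) + (π₂' (some d) : ℕ) < sp + 2 * n) := by
  refine ⟨π₁.trans (shiftPerm x x' hxx'), π₂.trans (shiftPerm y y' hyy'),
    coincident_shift L π₁ hcoin₁ c x x' hx hxx' hopp₁,
    coincident_shift L π₂ hcoin₂ c y y' hy hyy' hopp₂,
    ?_, ?_, ?_, ?_, ?_, ?_, ?_⟩
  · simp only [Equiv.trans_apply]; rw [hx]; exact shiftPerm_apply_self hxx'
  · simp only [Equiv.trans_apply]; rw [hy]; exact shiftPerm_apply_self hyy'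
  · intro d hd
    simp only [Equiv.trans_apply]
    exact shiftPerm_apply_of_out hxx' hd
  · intro d _ h1 h2
    simp only [Equiv.trans_apply]
    exact shiftPerm_apply_of_mem hxx' h1 h2
  · intro d hd
    simp only [Equiv.trans_apply]
    exact shiftPerm_apply_of_out hyy' hd
  · intro d _ h1 h2
    simp only [Equiv.trans_apply]
    exact shiftPerm_apply_of_mem hyy' h1 h2
  · intro e
    by_cases he : e = c
    · subst he
      simp only [Equiv.trans_apply]
      rw [hx, hy, shiftPerm_apply_self, shiftPerm_apply_self]
      exact hscore
    · have h1 : π₁ (some e) ≠ x := fun hh =>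
        he (Option.some.inj (π₁.injective (hh.trans hx.symm)))
      have h2 : π₂ (some e) ≠ y := fun hh =>
        he (Option.some.inj (π₂.injective (hh.trans hy.symm)))
      have l1 := shiftPerm_le hxx' h1
      have l2 := shiftPerm_le hyy' h2
      have := hsucc e
      simp only [Equiv.trans_apply]
      omega
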